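/- The lattice esTam_n is semidistributive: for all fb-tableaux x, y, z of size n, if x ∨ z = y ∨ z then (x ∧ y) ∨ z = x ∨ z, and if x ∧ z = y ∧ z then (x ∨ y) ∧ z = x ∧ z. -/
import Mathlib


open scoped Classical

namespace EsTam

/-- A cell `(i, j)`: `i` is the row index, `j` the column index. -/
abbrev Cell := ℕ × ℕ

/-- Membership in the staircase shape of size `n`: rows `1` and `2` consist of the
cells `(i, j)` with `1 ≤ j ≤ n`, and row `i` for `3 ≤ i ≤ n` consists of the cells
`(i, j)` with `i - 1 ≤ j ≤ n`. -/
def IsCell (n : ℕ) (c : Cell) : Prop :=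
  1 ≤ c.1 ∧ c.1 ≤ n ∧ 1 ≤ c.2 ∧ c.2 ≤ n ∧ (c.1 ≤ 2 ∨ c.1 - 1 ≤ c.2)

/-- The root cell `(1, n)`. -/
def root (n : ℕ) : Cell := (1, n)

/-- The border cells `(i, i - 1)` for `2 ≤ i ≤ n`. -/
def IsBorder (n : ℕ) (c : Cell) : Prop :=
  2 ≤ c.1 ∧ c.1 ≤ n ∧ c.2 = c.1 - 1

/-- An fb-tableau of size `n`: a set of cells of the staircase shape containing
the root and all border cells, and such that every cell other than the root has a
cell of the tableau strictly to its left in its row (same `i`, larger `j`) or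
strictly above it in its column (same `j`, smaller `i`). -/
structure FB (n : ℕ) where
  cells : Set Cell
  isCell_of_mem : ∀ c ∈ cells, IsCell n c
  root_mem : root n ∈ cells
  border_mem : ∀ c : Cell, IsBorder n c → c ∈ cells
  supported : ∀ c ∈ cells, c ≠ root n →
    (∃ j', c.2 < j' ∧ ((c.1, j') : Cell) ∈ cells) ∨
    (∃ i', i' < c.1 ∧ ((i', c.2) : Cell) ∈ cells)

variable {n : ℕ}

/-- `c` is a left-arrow of `T`: a cell of `T`, other than the root, with no cell of
`T` strictly to its left in its row. -/
def IsLeftArrow (T : FB n) (c : Cell) : Prop :=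
  c ∈ T.cells ∧ c ≠ root n ∧ ∀ j', c.2 < j' → ((c.1, j') : Cell) ∉ T.cells

/-- `c` is an up-arrow of `T`: a cell of `T`, other than the root, with no cell of
`T` strictly above it in its column. -/
def IsUpArrow (T : FB n) (c : Cell) : Prop :=
  c ∈ T.cells ∧ c ≠ root n ∧ ∀ i', i' < c.1 → ((i', c.2) : Cell) ∉ T.cells

/-- The row space of `T`: cells lying, in their row, weakly to the right of the
root or of a left-arrow of `T`. -/
def RowSp (T : FB n) : Set Cell :=
  {c | IsCell n c ∧ ∃ j', c.2 ≤ j' ∧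
    (((c.1, j') : Cell) = root n ∨ IsLeftArrow T (c.1, j'))}

/-- The column space of `T`: cells lying, in their column, weakly below the root or
an up-arrow of `T`. -/
def ColSp (T : FB n) : Set Cell :=
  {c | IsCell n c ∧ ∃ i', i' ≤ c.1 ∧
    (((i', c.2) : Cell) = root n ∨ IsUpArrow T (i', c.2))}

/-- `c` is a free cell of `T`: it lies strictly below the up-arrow of `T` in its
column and strictly to the right of the left-arrow of `T` in its row. -/
def IsFree (T : FB n) (c : Cell) : Prop :=
  IsCell n c ∧ (∃ i', i' < c.1 ∧ IsUpArrow T (i', c.2)) ∧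
    (∃ j', c.2 < j' ∧ IsLeftArrow T (c.1, j'))

/-- The relation `S ⊲ T` on fb-tableaux of size `n`. -/
def Lhd (S T : FB n) : Prop :=
  ColSp S ⊆ ColSp T ∧ RowSp T ⊆ RowSp S ∧
    ∀ c : Cell, IsFree S c → IsFree T c → c ∈ S.cells → c ∈ T.cells

/-- `T` covers `S` in `esTam n`. -/
def CovRel (S T : FB n) : Prop :=
  Lhd S T ∧ S ≠ T ∧ ∀ U : FB n, Lhd S U → Lhd U T → U = S ∨ U = T

/-- `m` is the greatest lower bound of `x` and `y` in `esTam n`. -/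
def IsMeet (x y m : FB n) : Prop :=
  Lhd m x ∧ Lhd m y ∧ ∀ t : FB n, Lhd t x → Lhd t y → Lhd t m

/-- `j` is the least upper bound of `x` and `y` in `esTam n`. -/
def IsJoin (x y j : FB n) : Prop :=
  Lhd x j ∧ Lhd y j ∧ ∀ t : FB n, Lhd x t → Lhd y t → Lhd j t

/-- `T` is join-irreducible: it covers exactly one element. -/
def JoinIrr (T : FB n) : Prop := ∃! S : FB n, CovRel S T

/-- `T` is meet-irreducible: it is covered by exactly one element. -/
def MeetIrr (T : FB n) : Prop := ∃! S : FB n, CovRel T S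

/-- A strict chain `f 0 ⊲ f 1 ⊲ ⋯ ⊲ f m` of length `m`. -/
def IsStrictChain {m : ℕ} (f : Fin (m + 1) → FB n) : Prop :=
  ∀ i j : Fin (m + 1), i < j → Lhd (f i) (f j) ∧ f i ≠ f j

/-- `T` is small: every cell of `T` other than the root is an arrow. -/
def IsSmall (T : FB n) : Prop :=
  ∀ c ∈ T.cells, c ≠ root n → IsLeftArrow T c ∨ IsUpArrow T c

/-- `T` is binary: `T` has no free cells. -/
def IsBinary (T : FB n) : Prop := ∀ c : Cell, ¬ IsFree T c

/-- `c` lies strictly above the up-arrow of `T` in its column. -/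
def PointedUp (T : FB n) (c : Cell) : Prop :=
  ∃ i', c.1 < i' ∧ IsUpArrow T (i', c.2)

/-- `c` is pointed by a left-arrow of `T`: it lies strictly to the left of the
left-arrow of `T` in its row. -/
def PointedLeft (T : FB n) (c : Cell) : Prop :=
  ∃ j', j' < c.2 ∧ IsLeftArrow T (c.1, j')

end EsTam

namespace EsTam

section Basic

variable {n : ℕ} {S T : FB n} {i j : ℕ} {c : Cell}

/-- Column of the left-arrow of row `i` (max `j` with `(i,j)` in `T`). -/
noncomputable def rowL (T : FB n) (i : ℕ) : ℕ := sSup {j | ((i, j) : Cell) ∈ T.cells}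

/-- Row of the up-arrow of column `j` (min `i` with `(i,j)` in `T`). -/
noncomputable def colU (T : FB n) (j : ℕ) : ℕ := sInf {i | ((i, j) : Cell) ∈ T.cells}

lemma rowset_bdd (T : FB n) (i : ℕ) : BddAbove {j | ((i, j) : Cell) ∈ T.cells} :=
  ⟨n, fun j hj => (T.isCell_of_mem _ hj).2.2.2.1⟩

lemma rowset_ne (T : FB n) (h1 : 1 ≤ i) (h2 : i ≤ n) :
    {j | ((i, j) : Cell) ∈ T.cells}.Nonempty := by
  rcases Nat.lt_or_ge i 2 with h | h
  · have : i = 1 := by omega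
    subst this
    exact ⟨n, T.root_mem⟩
  · exact ⟨i - 1, T.border_mem _ ⟨h, h2, rfl⟩⟩

lemma colset_ne (T : FB n) (h1 : 1 ≤ j) (h2 : j ≤ n) :
    {i | ((i, j) : Cell) ∈ T.cells}.Nonempty := by
  rcases Nat.lt_or_ge j n with h | h
  · exact ⟨j + 1, T.border_mem _ ⟨by omega, by omega, rfl⟩⟩
  · have : j = n := by omega
    subst this
    exact ⟨1, T.root_mem⟩

lemma mem_rowL (T : FB n) (h1 : 1 ≤ i) (h2 : i ≤ n) : ((i, rowL T i) : Cell) ∈ T.cells :=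
  Nat.sSup_mem (rowset_ne T h1 h2) (rowset_bdd T i)

lemma le_rowL (T : FB n) (h : ((i, j) : Cell) ∈ T.cells) : j ≤ rowL T i :=
  le_csSup (rowset_bdd T i) h

lemma mem_colU (T : FB n) (h1 : 1 ≤ j) (h2 : j ≤ n) : ((colU T j, j) : Cell) ∈ T.cells :=
  Nat.sInf_mem (colset_ne T h1 h2)

lemma colU_le (T : FB n) (h : ((i, j) : Cell) ∈ T.cells) : colU T j ≤ i :=
  Nat.sInf_le h

lemma rowL_le (T : FB n) (h1 : 1 ≤ i) (h2 : i ≤ n) : rowL T i ≤ n :=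
  (T.isCell_of_mem _ (mem_rowL T h1 h2)).2.2.2.1

lemma pred_le_rowL (T : FB n) (h1 : 2 ≤ i) (h2 : i ≤ n) : i - 1 ≤ rowL T i :=
  le_rowL T (T.border_mem _ ⟨h1, h2, rfl⟩)

lemma one_le_rowL (T : FB n) (h1 : 2 ≤ i) (h2 : i ≤ n) : 1 ≤ rowL T i := by
  have := pred_le_rowL T h1 h2; omega

lemma one_le_colU (T : FB n) (h1 : 1 ≤ j) (h2 : j ≤ n) : 1 ≤ colU T j :=
  (T.isCell_of_mem _ (mem_colU T h1 h2)).1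

lemma colU_le_succ (T : FB n) (h1 : 1 ≤ j) (h2 : j < n) : colU T j ≤ j + 1 :=
  colU_le T (T.border_mem _ ⟨by omega, by omega, rfl⟩)

lemma colU_le_n (T : FB n) (h1 : 1 ≤ j) (h2 : j ≤ n) : colU T j ≤ n :=
  (T.isCell_of_mem _ (mem_colU T h1 h2)).2.1

lemma isLeftArrow_rowL (T : FB n) (h1 : 2 ≤ i) (h2 : i ≤ n) : IsLeftArrow T (i, rowL T i) := by
  refine ⟨mem_rowL T (by omega) h2, ?_, ?_⟩
  · intro h
    have : i = 1 := congrArg Prod.fst h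
    omega
  · intro j' hj' hmem
    dsimp only at hj' hmem
    exact absurd (le_rowL T hmem) (by omega)

lemma IsLeftArrow.eq_rowL (h : IsLeftArrow T c) : 2 ≤ c.1 ∧ c.1 ≤ n ∧ c.2 = rowL T c.1 := by
  obtain ⟨hmem, hroot, hmax⟩ := h
  obtain ⟨hi1, hin, hj1, hjn, _⟩ := T.isCell_of_mem _ hmem
  have hi2 : 2 ≤ c.1 := by
    by_contra hlt
    have hc1 : c.1 = 1 := by omega
    have hjn' : c.2 < n := by
      rcases Nat.lt_or_ge c.2 n with h | h
      · exact h
      · exfalso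
        apply hroot
        have : c.2 = n := by omega
        unfold root
        rw [Prod.ext_iff]
        exact ⟨hc1, this⟩
    have := hmax n hjn'
    apply this
    have : ((c.1, n) : Cell) = root n := by
      unfold root; rw [Prod.ext_iff]; exact ⟨hc1, rfl⟩
    rw [this]
    exact T.root_mem
  refine ⟨hi2, hin, ?_⟩
  have hle : c.2 ≤ rowL T c.1 := le_rowL T (by simpa using hmem)
  rcases Nat.lt_or_ge c.2 (rowL T c.1) with h | h
  · exact absurd (mem_rowL T (by omega) hin) (hmax _ h)
  · omega

lemma isUpArrow_colU (T : FB n) (h1 : 1 ≤ j) (h2 : j < n) : IsUpArrow T (colU T j, j) := by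
  refine ⟨mem_colU T h1 (by omega), ?_, ?_⟩
  · intro h
    have : j = n := congrArg Prod.snd h
    omega
  · intro i' hi' hmem
    dsimp only at hi' hmem
    exact absurd (colU_le T hmem) (by omega)

lemma IsUpArrow.eq_colU (h : IsUpArrow T c) : 1 ≤ c.2 ∧ c.2 < n ∧ c.1 = colU T c.2 := by
  obtain ⟨hmem, hroot, hmin⟩ := h
  obtain ⟨hi1, hin, hj1, hjn, _⟩ := T.isCell_of_mem _ hmem
  have hjn' : c.2 < n := by
    by_contra hge
    have hc2 : c.2 = n := by omega
    rcases Nat.lt_or_ge 1 c.1 with h | h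
    · apply hmin 1 h
      have : ((1, c.2) : Cell) = root n := by
        unfold root; rw [Prod.ext_iff]; exact ⟨rfl, hc2⟩
      rw [this]; exact T.root_mem
    · apply hroot
      unfold root; rw [Prod.ext_iff]
      exact ⟨by omega, hc2⟩
  refine ⟨hj1, hjn', ?_⟩
  have hle : colU T c.2 ≤ c.1 := colU_le T (by simpa using hmem)
  rcases Nat.lt_or_ge (colU T c.2) c.1 with h | h
  · exact absurd (mem_colU T hj1 (by omega)) (hmin _ h)
  · omega

/-- Strong validity (A): the up-arrow of the column of a left-arrow is strictly above it. -/
lemma vA (T : FB n) (h1 : 2 ≤ i) (h2 : i ≤ n) : colU T (rowL T i) < i := by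
  have hmem := mem_rowL T (by omega) h2
  have hroot : ((i, rowL T i) : Cell) ≠ root n := by
    intro h; have : i = 1 := congrArg Prod.fst h; omega
  rcases T.supported _ hmem hroot with ⟨j', hj', hmem'⟩ | ⟨i', hi', hmem'⟩
  · dsimp only at hj' hmem'
    exact absurd (le_rowL T hmem') (by omega)
  · dsimp only at hi' hmem'
    have := colU_le T hmem'; omega

/-- Strong validity (B): the left-arrow of the row of an up-arrow is strictly to its left. -/
lemma vB (T : FB n) (h1 : 1 ≤ j) (h2 : j < n) : j < rowL T (colU T j) := by
  have hmem := mem_colU T h1 (by omega)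
  have hroot : ((colU T j, j) : Cell) ≠ root n := by
    intro h; have : j = n := congrArg Prod.snd h; omega
  rcases T.supported _ hmem hroot with ⟨j', hj', hmem'⟩ | ⟨i', hi', hmem'⟩
  · dsimp only at hj' hmem'
    have := le_rowL T hmem'; omega
  · dsimp only at hi' hmem'
    exact absurd (colU_le T hmem') (by omega)

lemma isFree_iff (T : FB n) (c : Cell) :
    IsFree T c ↔ IsCell n c ∧ c.2 < n ∧ colU T c.2 < c.1 ∧ c.2 < rowL T c.1 := by
  constructor
  · rintro ⟨hc, ⟨i', hi', hua⟩, ⟨j', hj', hla⟩⟩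
    obtain ⟨h1, h2, h3⟩ := IsUpArrow.eq_colU (c := ((i', c.2) : Cell)) hua
    obtain ⟨h4, h5, h6⟩ := IsLeftArrow.eq_rowL (c := ((c.1, j') : Cell)) hla
    simp only at h1 h2 h3 h4 h5 h6
    exact ⟨hc, h2, by omega, by omega⟩
  · rintro ⟨hc, hn2, hU, hL⟩
    obtain ⟨hi1, hin, hj1, hjn, _⟩ := id hc
    have h2 : 2 ≤ c.1 := by
      have := one_le_colU T hj1 hjn; omega
    refine ⟨hc, ⟨colU T c.2, hU, ?_⟩, ⟨rowL T c.1, hL, ?_⟩⟩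
    · exact isUpArrow_colU T hj1 hn2
    · exact isLeftArrow_rowL T h2 hin

end Basic

section Order

variable {n : ℕ} {S T V : FB n} {i j : ℕ} {c : Cell}

lemma mem_rowSp_iff : c ∈ RowSp T ↔ IsCell n c ∧ (c.1 = 1 ∨ (2 ≤ c.1 ∧ c.2 ≤ rowL T c.1)) := by
  constructor
  · rintro ⟨hc, j', hj', h | h⟩
    · have h1 : c.1 = 1 := congrArg Prod.fst h
      exact ⟨hc, Or.inl h1⟩
    · obtain ⟨h2, _, h4⟩ := IsLeftArrow.eq_rowL (c := ((c.1, j') : Cell)) h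
      dsimp only at h2 h4
      exact ⟨hc, Or.inr ⟨h2, by omega⟩⟩
  · rintro ⟨hc, h1 | ⟨h2, h3⟩⟩
    · refine ⟨hc, n, hc.2.2.2.1, Or.inl ?_⟩
      unfold root; rw [Prod.ext_iff]; exact ⟨h1, rfl⟩
    · exact ⟨hc, rowL T c.1, h3, Or.inr (isLeftArrow_rowL T h2 hc.2.1)⟩

lemma mem_colSp_iff : c ∈ ColSp T ↔ IsCell n c ∧ (c.2 = n ∨ colU T c.2 ≤ c.1) := by
  constructor
  · rintro ⟨hc, i', hi', h | h⟩
    · have h1 : c.2 = n := congrArg Prod.snd h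
      exact ⟨hc, Or.inl h1⟩
    · obtain ⟨_, _, h4⟩ := IsUpArrow.eq_colU (c := ((i', c.2) : Cell)) h
      dsimp only at h4
      exact ⟨hc, Or.inr (by omega)⟩
  · rintro ⟨hc, h1 | h1⟩
    · refine ⟨hc, 1, hc.1, Or.inl ?_⟩
      unfold root; rw [Prod.ext_iff]; exact ⟨rfl, h1⟩
    · rcases Nat.lt_or_ge c.2 n with h | h
      · exact ⟨hc, colU T c.2, h1, Or.inr (isUpArrow_colU T hc.2.2.1 h)⟩
      · have hn : c.2 = n := by have := hc.2.2.2.1; omega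
        refine ⟨hc, 1, hc.1, Or.inl ?_⟩
        unfold root; rw [Prod.ext_iff]; exact ⟨rfl, hn⟩

lemma rowSp_subset_iff : RowSp T ⊆ RowSp S ↔ ∀ i, 2 ≤ i → i ≤ n → rowL T i ≤ rowL S i := by
  constructor
  · intro h i h2 hn'
    have hc : IsCell n ((i, rowL T i) : Cell) := T.isCell_of_mem _ (mem_rowL T (by omega) hn')
    have hmem : ((i, rowL T i) : Cell) ∈ RowSp T :=
      mem_rowSp_iff.mpr ⟨hc, Or.inr ⟨h2, le_rfl⟩⟩
    have := (mem_rowSp_iff.mp (h hmem)).2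
    dsimp only at this
    rcases this with h1 | ⟨_, h1⟩
    · omega
    · exact h1
  · intro h c hc
    obtain ⟨hcell, hd⟩ := mem_rowSp_iff.mp hc
    refine mem_rowSp_iff.mpr ⟨hcell, ?_⟩
    rcases hd with h1 | ⟨h2, h3⟩
    · exact Or.inl h1
    · exact Or.inr ⟨h2, le_trans h3 (h _ h2 hcell.2.1)⟩

lemma colSp_subset_iff : ColSp S ⊆ ColSp T ↔ ∀ j, 1 ≤ j → j < n → colU T j ≤ colU S j := by
  constructor
  · intro h j h1 h2
    have hc : IsCell n ((colU S j, j) : Cell) := S.isCell_of_mem _ (mem_colU S h1 (by omega))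
    have hmem : ((colU S j, j) : Cell) ∈ ColSp S :=
      mem_colSp_iff.mpr ⟨hc, Or.inr le_rfl⟩
    have := (mem_colSp_iff.mp (h hmem)).2
    dsimp only at this
    rcases this with h3 | h3
    · omega
    · exact h3
  · intro h c hc
    obtain ⟨hcell, hd⟩ := mem_colSp_iff.mp hc
    refine mem_colSp_iff.mpr ⟨hcell, ?_⟩
    rcases hd with h1 | h1
    · exact Or.inl h1
    · rcases Nat.lt_or_ge c.2 n with hh | hh
      · exact Or.inr (le_trans (h _ hcell.2.2.1 hh) h1)
      · exact Or.inl (by have := hcell.2.2.2.1; omega)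

lemma lhd_iff :
    Lhd S T ↔ (∀ j, 1 ≤ j → j < n → colU T j ≤ colU S j) ∧
      (∀ i, 2 ≤ i → i ≤ n → rowL T i ≤ rowL S i) ∧
      (∀ c : Cell, IsFree S c → IsFree T c → c ∈ S.cells → c ∈ T.cells) := by
  unfold Lhd
  rw [colSp_subset_iff, rowSp_subset_iff]

lemma mem_cases (h : c ∈ T.cells) :
    c = root n ∨ IsLeftArrow T c ∨ IsUpArrow T c ∨ IsFree T c := by
  by_cases hr : c = root n
  · exact Or.inl hr
  obtain ⟨hi1, hin, hj1, hjn, _⟩ := T.isCell_of_mem _ h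
  by_cases hla : IsLeftArrow T c
  · exact Or.inr (Or.inl hla)
  by_cases hua : IsUpArrow T c
  · exact Or.inr (Or.inr (Or.inl hua))
  refine Or.inr (Or.inr (Or.inr ?_))
  have hcc : ((c.1, c.2) : Cell) = c := rfl
  have hle : c.2 ≤ rowL T c.1 := le_rowL T (by rw [hcc]; exact h)
  have hue : colU T c.2 ≤ c.1 := colU_le T (by rw [hcc]; exact h)
  have hi2 : 2 ≤ c.1 := by
    rcases Nat.lt_or_ge c.1 2 with h1 | h1
    · exfalso
      have hc1 : c.1 = 1 := by omega
      -- row 1 cell: it is root or an up-arrow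
      have hj : c.2 < n := by
        rcases Nat.lt_or_ge c.2 n with h2 | h2
        · exact h2
        · exfalso; apply hr
          unfold root; rw [Prod.ext_iff]; exact ⟨hc1, by omega⟩
      apply hua
      refine ⟨h, hr, ?_⟩
      intro i' hi' hmem
      have := (T.isCell_of_mem _ hmem).1
      omega
    · exact h1
  have hlt : c.2 < rowL T c.1 := by
    rcases Nat.lt_or_ge c.2 (rowL T c.1) with h1 | h1
    · exact h1
    · exfalso
      have he : c.2 = rowL T c.1 := by omega
      apply hla
      have : c = ((c.1, rowL T c.1) : Cell) := by rw [Prod.ext_iff]; exact ⟨rfl, he⟩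
      rw [this]
      exact isLeftArrow_rowL T hi2 hin
  have hjlt : c.2 < n := by
    have := rowL_le T (by omega : 1 ≤ c.1) hin
    omega
  have hult : colU T c.2 < c.1 := by
    rcases Nat.lt_or_ge (colU T c.2) c.1 with h1 | h1
    · exact h1
    · exfalso
      have he : c.1 = colU T c.2 := by omega
      apply hua
      have : c = ((colU T c.2, c.2) : Cell) := by rw [Prod.ext_iff]; exact ⟨he, rfl⟩
      rw [this]
      exact isUpArrow_colU T hj1 hjlt
  exact (isFree_iff T c).mpr ⟨T.isCell_of_mem _ h, hjlt, hult, hlt⟩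

lemma FB.cells_inj (h : S.cells = T.cells) : S = T := by
  cases S; cases T
  simp only at h
  subst h
  rfl

lemma isFree_congr (hU : ∀ j, 1 ≤ j → j < n → colU S j = colU T j)
    (hL : ∀ i, 2 ≤ i → i ≤ n → rowL S i = rowL T i) :
    IsFree S c → IsFree T c := by
  intro h
  obtain ⟨hc, h2, h3, h4⟩ := (isFree_iff S c).mp h
  obtain ⟨hi1, hin, hj1, hjn, _⟩ := id hc
  have hi2 : 2 ≤ c.1 := by have := one_le_colU S hj1 hjn; omega
  refine (isFree_iff T c).mpr ⟨hc, h2, ?_, ?_⟩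
  · rw [← hU _ hj1 h2]; exact h3
  · rw [← hL _ hi2 hin]; exact h4

lemma eq_of_arrows_free (hL : ∀ i, 2 ≤ i → i ≤ n → rowL S i = rowL T i)
    (hU : ∀ j, 1 ≤ j → j < n → colU S j = colU T j)
    (h1 : ∀ c : Cell, IsFree S c → c ∈ S.cells → c ∈ T.cells)
    (h2 : ∀ c : Cell, IsFree T c → c ∈ T.cells → c ∈ S.cells) : S = T := by
  apply FB.cells_inj
  ext c
  constructor
  · intro h
    rcases mem_cases h with hr | hla | hua | hf
    · rw [hr]; exact T.root_mem
    · obtain ⟨ha, hb, hc⟩ := hla.eq_rowL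
      have : c = ((c.1, rowL T c.1) : Cell) := by
        rw [Prod.ext_iff]; exact ⟨rfl, by rw [hc, hL _ ha hb]⟩
      rw [this]; exact mem_rowL T (by omega) hb
    · obtain ⟨ha, hb, hc⟩ := hua.eq_colU
      have : c = ((colU T c.2, c.2) : Cell) := by
        rw [Prod.ext_iff]; exact ⟨by rw [hc, hU _ ha hb], rfl⟩
      rw [this]; exact mem_colU T ha (by omega)
    · exact h1 c hf h
  · intro h
    rcases mem_cases h with hr | hla | hua | hf
    · rw [hr]; exact S.root_mem
    · obtain ⟨ha, hb, hc⟩ := hla.eq_rowL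
      have : c = ((c.1, rowL S c.1) : Cell) := by
        rw [Prod.ext_iff]; exact ⟨rfl, by rw [hc, hL _ ha hb]⟩
      rw [this]; exact mem_rowL S (by omega) hb
    · obtain ⟨ha, hb, hc⟩ := hua.eq_colU
      have : c = ((colU S c.2, c.2) : Cell) := by
        rw [Prod.ext_iff]; exact ⟨by rw [hc, hU _ ha hb], rfl⟩
      rw [this]; exact mem_colU S ha (by omega)
    · exact h2 c hf h

lemma lhd_trans (h1 : Lhd S T) (h2 : Lhd T V) : Lhd S V := by
  rw [lhd_iff] at h1 h2 ⊢
  obtain ⟨hU1, hL1, hF1⟩ := h1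
  obtain ⟨hU2, hL2, hF2⟩ := h2
  refine ⟨fun j a b => le_trans (hU2 j a b) (hU1 j a b),
    fun i a b => le_trans (hL2 i a b) (hL1 i a b), ?_⟩
  intro c hfS hfV hmem
  obtain ⟨hc, hn2, hUS, hLS⟩ := (isFree_iff S c).mp hfS
  obtain ⟨_, _, hUV, hLV⟩ := (isFree_iff V c).mp hfV
  obtain ⟨hi1, hin, hj1, hjn, _⟩ := id hc
  have hi2 : 2 ≤ c.1 := by have := one_le_colU S hj1 hjn; omega
  have hfT : IsFree T c := by
    refine (isFree_iff T c).mpr ⟨hc, hn2, ?_, ?_⟩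
    · exact lt_of_le_of_lt (hU1 _ hj1 hn2) hUS
    · exact lt_of_lt_of_le hLV (hL2 _ hi2 hin)
  exact hF2 c hfT hfV (hF1 c hfS hfT hmem)

lemma lhd_antisymm (h1 : Lhd S T) (h2 : Lhd T S) : S = T := by
  rw [lhd_iff] at h1 h2
  obtain ⟨hU1, hL1, hF1⟩ := h1
  obtain ⟨hU2, hL2, hF2⟩ := h2
  have hU : ∀ j, 1 ≤ j → j < n → colU S j = colU T j :=
    fun j a b => le_antisymm (hU2 j a b) (hU1 j a b)
  have hL : ∀ i, 2 ≤ i → i ≤ n → rowL S i = rowL T i :=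
    fun i a b => le_antisymm (hL2 i a b) (hL1 i a b)
  refine eq_of_arrows_free hL hU ?_ ?_
  · intro c hf hm
    exact hF1 c hf (isFree_congr hU hL hf) hm
  · intro c hf hm
    exact hF2 c hf (isFree_congr (fun j a b => (hU j a b).symm) (fun i a b => (hL i a b).symm) hf) hm

end Order

section Blueprint

variable {n : ℕ}

/-- Data for constructing an fb-tableau: left-arrow columns `L`, up-arrow rows `U`,
and a set of free cells `F`. -/
structure BP (n : ℕ) where
  L : ℕ → ℕ
  U : ℕ → ℕ
  F : Set Cell
  hL1 : ∀ i, 2 ≤ i → i ≤ n → i - 1 ≤ L i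
  hL2 : ∀ i, 2 ≤ i → i ≤ n → 1 ≤ L i
  hL3 : ∀ i, 2 ≤ i → i ≤ n → L i ≤ n
  hU1 : ∀ j, 1 ≤ j → j < n → 1 ≤ U j
  hU2 : ∀ j, 1 ≤ j → j < n → U j ≤ j + 1
  hU3 : ∀ j, 1 ≤ j → j < n → U j ≤ n
  hA : ∀ i, 2 ≤ i → i ≤ n → L i = n ∨ (L i < n ∧ U (L i) < i)
  hB : ∀ j, 1 ≤ j → j < n → U j = 1 ∨ (2 ≤ U j ∧ U j ≤ n ∧ j < L (U j))
  hF : ∀ c ∈ F, IsCell n c ∧ 2 ≤ c.1 ∧ c.1 ≤ n ∧ 1 ≤ c.2 ∧ c.2 < n ∧ U c.2 < c.1 ∧ c.2 < L c.1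
  hForced : ∀ i, 2 ≤ i → i ≤ n → i - 1 < L i → U (i - 1) < i → ((i, i - 1) : Cell) ∈ F

variable (D : BP n)

def BP.cellSet : Set Cell :=
  {c | c = root n ∨ (2 ≤ c.1 ∧ c.1 ≤ n ∧ c.2 = D.L c.1) ∨
    (1 ≤ c.2 ∧ c.2 < n ∧ c.1 = D.U c.2) ∨ c ∈ D.F}

def BP.toFB (hn : 1 ≤ n) : FB n where
  cells := D.cellSet
  isCell_of_mem := by
    rintro ⟨i, j⟩ (hr | ⟨h1, h2, h3⟩ | ⟨h1, h2, h3⟩ | hf)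
    · have hi : i = 1 := congrArg Prod.fst hr
      have hj : j = n := congrArg Prod.snd hr
      exact ⟨by omega, by omega, by omega, by omega, Or.inl (by omega)⟩
    · dsimp only at h1 h2 h3
      have := D.hL1 i h1 h2
      have := D.hL2 i h1 h2
      have := D.hL3 i h1 h2
      exact ⟨by omega, h2, by omega, by omega, Or.inr (by omega)⟩
    · dsimp only at h1 h2 h3
      have := D.hU1 j h1 h2
      have := D.hU2 j h1 h2
      have := D.hU3 j h1 h2
      exact ⟨by omega, by omega, h1, by omega, by
        rcases Nat.lt_or_ge i 3 with h | h
        · exact Or.inl (by omega)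
        · exact Or.inr (by omega)⟩
    · exact (D.hF _ hf).1
  root_mem := Or.inl rfl
  border_mem := by
    rintro ⟨i, j⟩ ⟨h1, h2, h3⟩
    dsimp only at h1 h2 h3
    subst h3
    by_cases hb : D.L i = i - 1
    · exact Or.inr (Or.inl ⟨h1, h2, hb.symm⟩)
    · have hlt : i - 1 < D.L i := by have := D.hL1 i h1 h2; omega
      by_cases hu : D.U (i - 1) = i
      · exact Or.inr (Or.inr (Or.inl ⟨by omega, by omega, hu.symm⟩))
      · have : D.U (i - 1) < i := by
          have := D.hU2 (i - 1) (by omega) (by omega)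
          omega
        exact Or.inr (Or.inr (Or.inr (D.hForced i h1 h2 hlt this)))
  supported := by
    rintro ⟨i, j⟩ hmem hroot
    rcases hmem with hr | ⟨h1, h2, h3⟩ | ⟨h1, h2, h3⟩ | hf
    · exact absurd hr hroot
    · -- left-arrow cell (i, L i): supported from above
      dsimp only at h1 h2 h3
      subst h3
      rcases D.hA i h1 h2 with hc | ⟨hc1, hc2⟩
      · refine Or.inr ⟨1, by omega, ?_⟩
        rw [hc]
        exact Or.inl rfl
      · refine Or.inr ⟨D.U (D.L i), hc2, ?_⟩
        exact Or.inr (Or.inr (Or.inl ⟨D.hL2 i h1 h2, hc1, rfl⟩))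
    · -- up-arrow cell (U j, j): supported from the left
      dsimp only at h1 h2 h3
      subst h3
      rcases D.hB j h1 h2 with hc | ⟨hc1, hc2, hc3⟩
      · refine Or.inl ⟨n, h2, ?_⟩
        rw [hc]
        exact Or.inl rfl
      · refine Or.inl ⟨D.L (D.U j), hc3, ?_⟩
        exact Or.inr (Or.inl ⟨hc1, hc2, rfl⟩)
    · -- free cell: supported by its left-arrow
      obtain ⟨hcell, ha, hb, hc, hd, he, hg⟩ := D.hF _ hf
      dsimp only at ha hb hc hd he hg
      exact Or.inl ⟨D.L i, hg, Or.inr (Or.inl ⟨ha, hb, rfl⟩)⟩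

lemma BP.rowL_toFB (hn : 1 ≤ n) {i : ℕ} (h1 : 2 ≤ i) (h2 : i ≤ n) :
    rowL (D.toFB hn) i = D.L i := by
  apply le_antisymm
  · apply csSup_le ⟨i - 1, (D.toFB hn).border_mem _ ⟨h1, h2, rfl⟩⟩
    rintro j (hr | ⟨ha, hb, hc⟩ | ⟨ha, hb, hc⟩ | hff)
    · have : i = 1 := congrArg Prod.fst hr
      omega
    · dsimp only at hc
      omega
    · dsimp only at ha hb hc
      rcases D.hB j ha hb with hl | ⟨hl1, hl2, hl3⟩
      · omega
      · rw [← hc] at hl3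
        omega
    · obtain ⟨_, _, _, _, _, _, hg⟩ := D.hF _ hff
      dsimp only at hg
      omega
  · apply le_rowL
    exact Or.inr (Or.inl ⟨h1, h2, rfl⟩)

lemma BP.colU_toFB (hn : 1 ≤ n) {j : ℕ} (h1 : 1 ≤ j) (h2 : j < n) :
    colU (D.toFB hn) j = D.U j := by
  apply le_antisymm
  · apply colU_le
    exact Or.inr (Or.inr (Or.inl ⟨h1, h2, rfl⟩))
  · apply le_csInf ⟨j + 1, (D.toFB hn).border_mem _ ⟨by omega, by omega, rfl⟩⟩
    rintro i (hr | ⟨ha, hb, hc⟩ | ⟨ha, hb, hc⟩ | hff)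
    · have : j = n := congrArg Prod.snd hr
      omega
    · dsimp only at ha hb hc
      rcases D.hA i ha hb with hl | ⟨hl1, hl2⟩
      · omega
      · rw [← hc] at hl2
        omega
    · dsimp only at hc
      omega
    · obtain ⟨_, _, _, _, _, he, _⟩ := D.hF _ hff
      dsimp only at he
      omega

lemma BP.mem_F_of_free (hn : 1 ≤ n) {c : Cell} (hf : IsFree (D.toFB hn) c)
    (hm : c ∈ (D.toFB hn).cells) : c ∈ D.F := by
  obtain ⟨hcell, hjn, hU, hL⟩ := (isFree_iff _ c).mp hf
  obtain ⟨hi1, hin, hj1, _, _⟩ := id hcell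
  have hi2 : 2 ≤ c.1 := by
    have := one_le_colU (D.toFB hn) hj1 (by omega)
    omega
  rw [D.colU_toFB hn hj1 hjn] at hU
  rw [D.rowL_toFB hn hi2 hin] at hL
  rcases hm with hr | ⟨ha, hb, hc⟩ | ⟨ha, hb, hc⟩ | hff
  · exfalso
    have : c.1 = 1 := congrArg Prod.fst hr
    omega
  · exfalso; omega
  · exfalso; omega
  · exact hff

lemma BP.F_subset_cells (hn : 1 ≤ n) {c : Cell} (h : c ∈ D.F) : c ∈ (D.toFB hn).cells :=
  Or.inr (Or.inr (Or.inr h))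

end Blueprint

section JoinCand

variable {n : ℕ} (x z : FB n)

/-- Row of the up-arrow of column `j` in the join of `x` and `z`. -/
noncomputable def joinU (j : ℕ) : ℕ :=
  sSup {t | 1 ≤ t ∧ t ≤ colU x j ∧ t ≤ colU z j ∧
    (t = 1 ∨ (2 ≤ t ∧ t ≤ n ∧ j < rowL x t ∧ j < rowL z t))}

variable {x z}

lemma joinU_mem {j : ℕ} (h1 : 1 ≤ j) (h2 : j ≤ n) :
    joinU x z j ∈ {t | 1 ≤ t ∧ t ≤ colU x j ∧ t ≤ colU z j ∧
      (t = 1 ∨ (2 ≤ t ∧ t ≤ n ∧ j < rowL x t ∧ j < rowL z t))} := by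
  apply Nat.sSup_mem
  · exact ⟨1, le_refl 1, one_le_colU x h1 h2, one_le_colU z h1 h2, Or.inl rfl⟩
  · exact ⟨colU x j, fun t ht => ht.2.1⟩

lemma le_joinU {j t : ℕ} (ht1 : 1 ≤ t) (ht2 : t ≤ colU x j) (ht3 : t ≤ colU z j)
    (ht4 : t = 1 ∨ (2 ≤ t ∧ t ≤ n ∧ j < rowL x t ∧ j < rowL z t)) : t ≤ joinU x z j :=
  le_csSup ⟨colU x j, fun s hs => hs.2.1⟩ ⟨ht1, ht2, ht3, ht4⟩

variable (x z)

noncomputable def joinBP : BP n where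
  L i := min (rowL x i) (rowL z i)
  U j := joinU x z j
  F := {c | IsCell n c ∧ 2 ≤ c.1 ∧ c.1 ≤ n ∧ 1 ≤ c.2 ∧ c.2 < n ∧
    joinU x z c.2 < c.1 ∧ c.2 < min (rowL x c.1) (rowL z c.1) ∧
    (IsBorder n c ∨ (IsFree x c ∧ c ∈ x.cells) ∨ (IsFree z c ∧ c ∈ z.cells))}
  hL1 := fun i h1 h2 => le_min (pred_le_rowL x h1 h2) (pred_le_rowL z h1 h2)
  hL2 := fun i h1 h2 => le_min (one_le_rowL x h1 h2) (one_le_rowL z h1 h2)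
  hL3 := fun i h1 h2 => le_trans (min_le_left _ _) (rowL_le x (by omega) h2)
  hU1 := fun j h1 h2 => (joinU_mem h1 (by omega)).1
  hU2 := fun j h1 h2 => le_trans (joinU_mem h1 (by omega)).2.1 (colU_le_succ x h1 h2)
  hU3 := fun j h1 h2 => le_trans (joinU_mem h1 (by omega)).2.1 (colU_le_n x h1 (by omega))
  hA := by
    intro i h1 h2
    rcases Nat.lt_or_ge (min (rowL x i) (rowL z i)) n with hlt | hge
    · refine Or.inr ⟨hlt, ?_⟩
      have hj1 : 1 ≤ min (rowL x i) (rowL z i) :=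
        le_min (one_le_rowL x h1 h2) (one_le_rowL z h1 h2)
      rcases min_cases (rowL x i) (rowL z i) with ⟨he, hle⟩ | ⟨he, hle⟩
      · calc joinU x z (min (rowL x i) (rowL z i))
            ≤ colU x (min (rowL x i) (rowL z i)) := (joinU_mem hj1 (by omega)).2.1
          _ < i := by rw [he]; exact vA x h1 h2
      · calc joinU x z (min (rowL x i) (rowL z i))
            ≤ colU z (min (rowL x i) (rowL z i)) := (joinU_mem hj1 (by omega)).2.2.1
          _ < i := by rw [he]; exact vA z h1 h2
    · exact Or.inl (le_antisymm (le_trans (min_le_left _ _) (rowL_le x (by omega) h2)) hge)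
  hB := by
    intro j h1 h2
    rcases (joinU_mem h1 (by omega : j ≤ n)).2.2.2 with hc | ⟨hc1, hc2, hc3, hc4⟩
    · exact Or.inl hc
    · exact Or.inr ⟨hc1, hc2, lt_min hc3 hc4⟩
  hF := fun c hc => ⟨hc.1, hc.2.1, hc.2.2.1, hc.2.2.2.1, hc.2.2.2.2.1, hc.2.2.2.2.2.1,
    hc.2.2.2.2.2.2.1⟩
  hForced := by
    intro i h1 h2 h3 h4
    refine ⟨⟨by omega, h2, by omega, by omega, Or.inr (by omega)⟩,
      h1, h2, by omega, by omega, h4, h3, Or.inl ⟨h1, h2, rfl⟩⟩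

variable {x z}

lemma lhd_joinBP_left (hn : 1 ≤ n) : Lhd x ((joinBP x z).toFB hn) := by
  rw [lhd_iff]
  refine ⟨?_, ?_, ?_⟩
  · intro j h1 h2
    rw [(joinBP x z).colU_toFB hn h1 h2]
    exact (joinU_mem h1 (by omega)).2.1
  · intro i h1 h2
    rw [(joinBP x z).rowL_toFB hn h1 h2]
    exact min_le_left _ _
  · intro c hfx hfc hmem
    apply (joinBP x z).F_subset_cells hn
    have hin := (joinBP x z).mem_F_of_free hn hfc
    obtain ⟨hcell, hjn, hU, hL⟩ := (isFree_iff _ c).mp hfc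
    obtain ⟨hi1, hin', hj1, _, _⟩ := id hcell
    have hi2 : 2 ≤ c.1 := by
      have := one_le_colU ((joinBP x z).toFB hn) hj1 (by omega)
      omega
    rw [(joinBP x z).colU_toFB hn hj1 hjn] at hU
    rw [(joinBP x z).rowL_toFB hn hi2 hin'] at hL
    exact ⟨hcell, hi2, hin', hj1, hjn, hU, hL, Or.inr (Or.inl ⟨hfx, hmem⟩)⟩

lemma lhd_joinBP_right (hn : 1 ≤ n) : Lhd z ((joinBP x z).toFB hn) := by
  rw [lhd_iff]
  refine ⟨?_, ?_, ?_⟩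
  · intro j h1 h2
    rw [(joinBP x z).colU_toFB hn h1 h2]
    exact (joinU_mem h1 (by omega)).2.2.1
  · intro i h1 h2
    rw [(joinBP x z).rowL_toFB hn h1 h2]
    exact min_le_right _ _
  · intro c hfz hfc hmem
    apply (joinBP x z).F_subset_cells hn
    obtain ⟨hcell, hjn, hU, hL⟩ := (isFree_iff _ c).mp hfc
    obtain ⟨hi1, hin', hj1, _, _⟩ := id hcell
    have hi2 : 2 ≤ c.1 := by
      have := one_le_colU ((joinBP x z).toFB hn) hj1 (by omega)
      omega
    rw [(joinBP x z).colU_toFB hn hj1 hjn] at hU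
    rw [(joinBP x z).rowL_toFB hn hi2 hin'] at hL
    exact ⟨hcell, hi2, hin', hj1, hjn, hU, hL, Or.inr (Or.inr ⟨hfz, hmem⟩)⟩

lemma joinChar (hn : 1 ≤ n) {A : FB n} (h : IsJoin x z A) :
    (∀ i, 2 ≤ i → i ≤ n → rowL A i = min (rowL x i) (rowL z i)) ∧
    (∀ j, 1 ≤ j → j < n → colU A j = joinU x z j) ∧
    (∀ c : Cell, IsFree A c → c ∈ A.cells →
      IsBorder n c ∨ (IsFree x c ∧ c ∈ x.cells) ∨ (IsFree z c ∧ c ∈ z.cells)) := by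
  obtain ⟨hxA, hzA, hmin⟩ := h
  have hAc : Lhd A ((joinBP x z).toFB hn) :=
    hmin _ (lhd_joinBP_left hn) (lhd_joinBP_right hn)
  rw [lhd_iff] at hxA hzA hAc
  have hLeq : ∀ i, 2 ≤ i → i ≤ n → rowL A i = min (rowL x i) (rowL z i) := by
    intro i h1 h2
    apply le_antisymm
    · exact le_min (hxA.2.1 i h1 h2) (hzA.2.1 i h1 h2)
    · have := hAc.2.1 i h1 h2
      rwa [(joinBP x z).rowL_toFB hn h1 h2] at this
  have hUeq : ∀ j, 1 ≤ j → j < n → colU A j = joinU x z j := by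
    intro j h1 h2
    apply le_antisymm
    · apply le_joinU (one_le_colU A h1 (by omega)) (hxA.1 j h1 h2) (hzA.1 j h1 h2)
      rcases Nat.lt_or_ge (colU A j) 2 with hc | hc
      · exact Or.inl (by have := one_le_colU A h1 (by omega : j ≤ n); omega)
      · refine Or.inr ⟨hc, colU_le_n A h1 (by omega), ?_, ?_⟩
        · calc j < rowL A (colU A j) := vB A h1 h2
            _ ≤ rowL x (colU A j) := hxA.2.1 _ hc (colU_le_n A h1 (by omega))
        · calc j < rowL A (colU A j) := vB A h1 h2
            _ ≤ rowL z (colU A j) := hzA.2.1 _ hc (colU_le_n A h1 (by omega))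
    · have := hAc.1 j h1 h2
      rwa [(joinBP x z).colU_toFB hn h1 h2] at this
  refine ⟨hLeq, hUeq, ?_⟩
  intro c hfA hmem
  have hfc : IsFree ((joinBP x z).toFB hn) c := by
    apply isFree_congr (S := A) ?_ ?_ hfA
    · intro j h1 h2
      rw [hUeq j h1 h2, (joinBP x z).colU_toFB hn h1 h2]
      rfl
    · intro i h1 h2
      rw [hLeq i h1 h2, (joinBP x z).rowL_toFB hn h1 h2]
      rfl
  have := (joinBP x z).mem_F_of_free hn hfc (hAc.2.2 c hfA hfc hmem)
  exact this.2.2.2.2.2.2.2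

end JoinCand

section MeetCand

variable {n : ℕ} (x y : FB n)

/-- Column of the left-arrow of row `i` in the meet of `x` and `y`. -/
noncomputable def meetL (i : ℕ) : ℕ :=
  sInf {s | rowL x i ≤ s ∧ rowL y i ≤ s ∧ s ≤ n ∧
    (s = n ∨ (1 ≤ s ∧ s < n ∧ max (colU x s) (colU y s) < i))}

variable {x y}

lemma meetL_mem {i : ℕ} (h1 : 2 ≤ i) (h2 : i ≤ n) :
    meetL x y i ∈ {s | rowL x i ≤ s ∧ rowL y i ≤ s ∧ s ≤ n ∧
      (s = n ∨ (1 ≤ s ∧ s < n ∧ max (colU x s) (colU y s) < i))} :=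
  Nat.sInf_mem ⟨n, rowL_le x (by omega) h2, rowL_le y (by omega) h2, le_refl n, Or.inl rfl⟩

lemma meetL_le {i s : ℕ} (hs1 : rowL x i ≤ s) (hs2 : rowL y i ≤ s) (hs3 : s ≤ n)
    (hs4 : s = n ∨ (1 ≤ s ∧ s < n ∧ max (colU x s) (colU y s) < i)) : meetL x y i ≤ s :=
  Nat.sInf_le ⟨hs1, hs2, hs3, hs4⟩

variable (x y)

noncomputable def meetBP : BP n where
  L i := meetL x y i
  U j := max (colU x j) (colU y j)
  F := {c | IsCell n c ∧ 2 ≤ c.1 ∧ c.1 ≤ n ∧ 1 ≤ c.2 ∧ c.2 < n ∧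
    max (colU x c.2) (colU y c.2) < c.1 ∧ c.2 < meetL x y c.1 ∧
    (IsFree x c → c ∈ x.cells) ∧ (IsFree y c → c ∈ y.cells)}
  hL1 := fun i h1 h2 => le_trans (pred_le_rowL x h1 h2) (meetL_mem h1 h2).1
  hL2 := fun i h1 h2 => le_trans (one_le_rowL x h1 h2) (meetL_mem h1 h2).1
  hL3 := fun i h1 h2 => (meetL_mem h1 h2).2.2.1
  hU1 := fun j h1 h2 => le_trans (one_le_colU x h1 (by omega)) (le_max_left _ _)
  hU2 := fun j h1 h2 => max_le (colU_le_succ x h1 h2) (colU_le_succ y h1 h2)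
  hU3 := fun j h1 h2 => max_le (colU_le_n x h1 (by omega)) (colU_le_n y h1 (by omega))
  hA := by
    intro i h1 h2
    rcases (meetL_mem (x := x) (y := y) h1 h2).2.2.2 with hc | ⟨hc1, hc2, hc3⟩
    · exact Or.inl hc
    · exact Or.inr ⟨hc2, hc3⟩
  hB := by
    intro j h1 h2
    rcases Nat.lt_or_ge (max (colU x j) (colU y j)) 2 with hc | hc
    · have hx2 : colU x j < 2 := lt_of_le_of_lt (le_max_left _ _) hc
      have hy2 : colU y j < 2 := lt_of_le_of_lt (le_max_right _ _) hc
      have hx1 : colU x j = 1 := by have := one_le_colU x h1 (by omega : j ≤ n); omega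
      have hy1 : colU y j = 1 := by have := one_le_colU y h1 (by omega : j ≤ n); omega
      refine Or.inl ?_
      show max (colU x j) (colU y j) = 1
      rw [hx1, hy1]
      exact max_self 1
    · refine Or.inr ⟨hc, max_le (colU_le_n x h1 (by omega)) (colU_le_n y h1 (by omega)), ?_⟩
      show j < meetL x y (max (colU x j) (colU y j))
      rcases max_cases (colU x j) (colU y j) with ⟨he, hle⟩ | ⟨he, hle⟩
      · rw [he]
        calc j < rowL x (colU x j) := vB x h1 h2
          _ ≤ meetL x y (colU x j) := (meetL_mem (by omega) (colU_le_n x h1 (by omega))).1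
      · rw [he]
        calc j < rowL y (colU y j) := vB y h1 h2
          _ ≤ meetL x y (colU y j) := (meetL_mem (by omega) (colU_le_n y h1 (by omega))).2.1
  hF := fun c hc => ⟨hc.1, hc.2.1, hc.2.2.1, hc.2.2.2.1, hc.2.2.2.2.1, hc.2.2.2.2.2.1,
    hc.2.2.2.2.2.2.1⟩
  hForced := by
    intro i h1 h2 h3 h4
    refine ⟨⟨by omega, h2, by omega, by omega, Or.inr (by omega)⟩,
      h1, h2, by omega, by omega, h4, h3, ?_, ?_⟩
    · intro _
      exact x.border_mem _ ⟨h1, h2, rfl⟩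
    · intro _
      exact y.border_mem _ ⟨h1, h2, rfl⟩

variable {x y}

lemma lhd_meetBP_left (hn : 1 ≤ n) : Lhd ((meetBP x y).toFB hn) x := by
  rw [lhd_iff]
  refine ⟨?_, ?_, ?_⟩
  · intro j h1 h2
    rw [(meetBP x y).colU_toFB hn h1 h2]
    exact le_max_left _ _
  · intro i h1 h2
    rw [(meetBP x y).rowL_toFB hn h1 h2]
    exact (meetL_mem h1 h2).1
  · intro c hfc hfx hmem
    have hin := (meetBP x y).mem_F_of_free hn hfc hmem
    exact hin.2.2.2.2.2.2.2.1 hfx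

lemma lhd_meetBP_right (hn : 1 ≤ n) : Lhd ((meetBP x y).toFB hn) y := by
  rw [lhd_iff]
  refine ⟨?_, ?_, ?_⟩
  · intro j h1 h2
    rw [(meetBP x y).colU_toFB hn h1 h2]
    exact le_max_right _ _
  · intro i h1 h2
    rw [(meetBP x y).rowL_toFB hn h1 h2]
    exact (meetL_mem h1 h2).2.1
  · intro c hfc hfy hmem
    have hin := (meetBP x y).mem_F_of_free hn hfc hmem
    exact hin.2.2.2.2.2.2.2.2 hfy

lemma meetChar (hn : 1 ≤ n) {m : FB n} (h : IsMeet x y m) :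
    (∀ i, 2 ≤ i → i ≤ n → rowL m i = meetL x y i) ∧
    (∀ j, 1 ≤ j → j < n → colU m j = max (colU x j) (colU y j)) ∧
    (∀ c : Cell, IsFree m c → (IsFree x c → c ∈ x.cells) → (IsFree y c → c ∈ y.cells) →
      c ∈ m.cells) := by
  obtain ⟨hmx, hmy, hmax⟩ := h
  have hcm : Lhd ((meetBP x y).toFB hn) m :=
    hmax _ (lhd_meetBP_left hn) (lhd_meetBP_right hn)
  rw [lhd_iff] at hmx hmy hcm
  have hUeq : ∀ j, 1 ≤ j → j < n → colU m j = max (colU x j) (colU y j) := by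
    intro j h1 h2
    apply le_antisymm
    · have := hcm.1 j h1 h2
      rwa [(meetBP x y).colU_toFB hn h1 h2] at this
    · exact max_le (hmx.1 j h1 h2) (hmy.1 j h1 h2)
  have hLeq : ∀ i, 2 ≤ i → i ≤ n → rowL m i = meetL x y i := by
    intro i h1 h2
    apply le_antisymm
    · have := hcm.2.1 i h1 h2
      rwa [(meetBP x y).rowL_toFB hn h1 h2] at this
    · apply meetL_le (hmx.2.1 i h1 h2) (hmy.2.1 i h1 h2) (rowL_le m (by omega) h2)
      rcases Nat.lt_or_ge (rowL m i) n with hlt | hge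
      · refine Or.inr ⟨one_le_rowL m h1 h2, hlt, ?_⟩
        rw [← hUeq _ (one_le_rowL m h1 h2) hlt]
        exact vA m h1 h2
      · exact Or.inl (le_antisymm (rowL_le m (by omega) h2) hge)
  refine ⟨hLeq, hUeq, ?_⟩
  intro c hfm hx hy
  obtain ⟨hcell, hjn, hU, hL⟩ := (isFree_iff _ c).mp hfm
  obtain ⟨hi1, hin, hj1, _, _⟩ := id hcell
  have hi2 : 2 ≤ c.1 := by
    have := one_le_colU m hj1 (by omega)
    omega
  have hfc : IsFree ((meetBP x y).toFB hn) c := by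
    apply isFree_congr (S := m) ?_ ?_ hfm
    · intro j h1 h2
      rw [hUeq j h1 h2, (meetBP x y).colU_toFB hn h1 h2]
      rfl
    · intro i h1 h2
      rw [hLeq i h1 h2, (meetBP x y).rowL_toFB hn h1 h2]
      rfl
  apply hcm.2.2 c hfc hfm
  apply (meetBP x y).F_subset_cells hn
  rw [hUeq _ hj1 hjn] at hU
  rw [hLeq _ hi2 hin] at hL
  exact ⟨hcell, hi2, hin, hj1, hjn, hU, hL, hx, hy⟩

end MeetCand

section Main

variable {n : ℕ}

lemma sd_join (hn : 1 ≤ n) {x y z A m w : FB n} (hxz : IsJoin x z A) (hyz : IsJoin y z A)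
    (hm : IsMeet x y m) (hw : IsJoin m z w) : w = A := by
  obtain ⟨hLx, hUx, hFx⟩ := joinChar hn hxz
  obtain ⟨hLy, hUy, hFy⟩ := joinChar hn hyz
  obtain ⟨hLm, hUm, hFm⟩ := meetChar hn hm
  obtain ⟨hLw, hUw, hFw⟩ := joinChar hn hw
  have hmA : Lhd m A := lhd_trans hm.1 hxz.1
  have hwA : Lhd w A := hw.2.2 A hmA hxz.2.1
  have hwA' := lhd_iff.mp hwA
  have hxA := lhd_iff.mp hxz.1
  have hyA := lhd_iff.mp hyz.1
  have hzA := lhd_iff.mp hxz.2.1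
  have hzw := lhd_iff.mp hw.2.1
  have hmw := lhd_iff.mp hw.1
  -- rows
  have hLeq : ∀ i, 2 ≤ i → i ≤ n → rowL w i = rowL A i := by
    intro i h1 h2
    refine le_antisymm ?_ (hwA'.2.1 i h1 h2)
    rw [hLw i h1 h2, hLx i h1 h2]
    rcases le_or_gt (rowL z i) (rowL x i) with hc | hc
    · omega
    · -- rowL x i < rowL z i, hence rowL y i = rowL x i
      have hxy : rowL y i = rowL x i := by
        have e1 := hLx i h1 h2
        have e2 := hLy i h1 h2
        omega
      have hmle : rowL m i ≤ rowL x i := by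
        rw [hLm i h1 h2]
        apply meetL_le le_rfl (le_of_eq hxy) (rowL_le x (by omega) h2)
        rcases Nat.lt_or_ge (rowL x i) n with hlt | hge
        · refine Or.inr ⟨one_le_rowL x h1 h2, hlt, ?_⟩
          have h3 : colU x (rowL x i) < i := vA x h1 h2
          have h4 : colU y (rowL x i) < i := by
            have := vA y h1 h2
            rwa [hxy] at this
          omega
        · exact Or.inl (le_antisymm (rowL_le x (by omega) h2) hge)
      omega
  -- columns
  have hUeq : ∀ j, 1 ≤ j → j < n → colU w j = colU A j := by
    intro j h1 h2
    refine le_antisymm ?_ (hwA'.1 j h1 h2)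
    set t := colU w j with htdef
    rcases Nat.lt_or_ge t 2 with hc | hc
    · have h3 : 1 ≤ t := one_le_colU w h1 (by omega)
      have := one_le_colU A h1 (by omega : j ≤ n)
      omega
    · have htn : t ≤ n := colU_le_n w h1 (by omega)
      have hjt : j < rowL w t := vB w h1 h2
      have hjA : j < rowL A t := by rwa [hLeq t hc htn] at hjt
      have hjx : j < rowL x t := lt_of_lt_of_le hjA (hxA.2.1 t hc htn)
      have hjy : j < rowL y t := lt_of_lt_of_le hjA (hyA.2.1 t hc htn)
      have hjz : j < rowL z t := lt_of_lt_of_le hjA (hzA.2.1 t hc htn)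
      have htz : t ≤ colU z j := hzw.1 j h1 h2
      have htm : t ≤ colU m j := hmw.1 j h1 h2
      rw [hUm j h1 h2] at htm
      rcases le_or_gt t (colU x j) with hcx | hcx
      · rw [hUx j h1 h2]
        exact le_joinU (by omega) hcx htz (Or.inr ⟨hc, htn, hjx, hjz⟩)
      · have hcy : t ≤ colU y j := by omega
        rw [hUy j h1 h2]
        exact le_joinU (by omega) hcy htz (Or.inr ⟨hc, htn, hjy, hjz⟩)
  -- Lhd A w
  have hAw : Lhd A w := by
    rw [lhd_iff]
    refine ⟨fun j a b => le_of_eq (hUeq j a b), fun i a b => le_of_eq (hLeq i a b), ?_⟩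
    intro c hfA hfw hmem
    rcases hFx c hfA hmem with hb | ⟨hfx, hmx'⟩ | ⟨hfz, hmz'⟩
    · exact w.border_mem _ hb
    · rcases hFy c hfA hmem with hb | ⟨hfy, hmy'⟩ | ⟨hfz, hmz'⟩
      · exact w.border_mem _ hb
      · -- free in both x and y : go through the meet m
        obtain ⟨hcell, hjn, hUx', hLx'⟩ := (isFree_iff x c).mp hfx
        obtain ⟨_, _, hUy', hLy'⟩ := (isFree_iff y c).mp hfy
        obtain ⟨hi1, hin, hj1, _, _⟩ := id hcell
        have hi2 : 2 ≤ c.1 := by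
          have := one_le_colU x hj1 (by omega)
          omega
        have hfm : IsFree m c := by
          refine (isFree_iff m c).mpr ⟨hcell, hjn, ?_, ?_⟩
          · rw [hUm _ hj1 hjn]
            omega
          · rw [hLm _ hi2 hin]
            have := (meetL_mem (x := x) (y := y) hi2 hin).1
            omega
        have hmm : c ∈ m.cells := hFm c hfm (fun _ => hmx') (fun _ => hmy')
        exact hmw.2.2 c hfm hfw hmm
      · exact hzw.2.2 c hfz hfw hmz'
    · exact hzw.2.2 c hfz hfw hmz'
  exact lhd_antisymm hwA hAw

lemma sd_meet (hn : 1 ≤ n) {x y z B p w : FB n} (hxz : IsMeet x z B) (hyz : IsMeet y z B)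
    (hp : IsJoin x y p) (hw : IsMeet p z w) : w = B := by
  obtain ⟨hLx, hUx, hFx⟩ := meetChar hn hxz
  obtain ⟨hLy, hUy, hFy⟩ := meetChar hn hyz
  obtain ⟨hLp, hUp, hFp⟩ := joinChar hn hp
  obtain ⟨hLw, hUw, hFw⟩ := meetChar hn hw
  have hBp : Lhd B p := lhd_trans hxz.1 hp.1
  have hBw : Lhd B w := hw.2.2 B hBp hxz.2.1
  have hBw' := lhd_iff.mp hBw
  have hwp := lhd_iff.mp hw.1
  have hwz := lhd_iff.mp hw.2.1
  -- columns
  have hUeq : ∀ j, 1 ≤ j → j < n → colU w j = colU B j := by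
    intro j h1 h2
    refine le_antisymm (hBw'.1 j h1 h2) ?_
    rw [hUw j h1 h2, hUx j h1 h2]
    rcases le_or_gt (colU x j) (colU z j) with hc | hc
    · omega
    · have hxy : colU y j = colU x j := by
        have e1 := hUx j h1 h2
        have e2 := hUy j h1 h2
        omega
      have h3 : 2 ≤ colU x j := by
        have := one_le_colU z h1 (by omega : j ≤ n)
        omega
      have h4 : colU x j ≤ n := colU_le_n x h1 (by omega)
      have hjx : j < rowL x (colU x j) := vB x h1 h2
      have hjy : j < rowL y (colU x j) := by
        have := vB y h1 h2
        rwa [hxy] at this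
      have h5 : colU x j ≤ joinU x y j :=
        le_joinU (by omega) le_rfl (by omega) (Or.inr ⟨h3, h4, hjx, hjy⟩)
      rw [← hUp j h1 h2] at h5
      omega
  -- rows
  have hLeq : ∀ i, 2 ≤ i → i ≤ n → rowL w i = rowL B i := by
    intro i h1 h2
    refine le_antisymm (hBw'.2.1 i h1 h2) ?_
    have hsw := hLw i h1 h2
    set s := rowL w i with hsdef
    have hsmem : meetL p z i = s := hsw.symm
    have hprops : rowL p i ≤ meetL p z i ∧ rowL z i ≤ meetL p z i ∧ meetL p z i ≤ n ∧
        (meetL p z i = n ∨ (1 ≤ meetL p z i ∧ meetL p z i < n ∧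
          max (colU p (meetL p z i)) (colU z (meetL p z i)) < i)) := meetL_mem h1 h2
    rw [hsmem] at hprops
    obtain ⟨hps, hzs, hsn, hdisj⟩ := hprops
    -- translate the up-arrow condition via colU w = colU B
    have hdisj' : ∀ u v : FB n, (∀ jj, 1 ≤ jj → jj < n → colU B jj = max (colU u jj) (colU v jj)) →
        s = n ∨ (1 ≤ s ∧ s < n ∧ max (colU u s) (colU v s) < i) := by
      intro u v huv
      rcases hdisj with hd | ⟨hd1, hd2, hd3⟩
      · exact Or.inl hd
      · refine Or.inr ⟨hd1, hd2, ?_⟩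
        have e1 : colU w s = max (colU p s) (colU z s) := hUw s hd1 hd2
        have e2 : colU w s = colU B s := hUeq s hd1 hd2
        have e3 : colU B s = max (colU u s) (colU v s) := huv s hd1 hd2
        omega
    have hpmin : rowL p i = min (rowL x i) (rowL y i) := hLp i h1 h2
    rcases le_or_gt (rowL x i) (rowL y i) with hc | hc
    · have hxs : rowL x i ≤ s := by omega
      rw [hLx i h1 h2]
      exact meetL_le hxs hzs hsn (hdisj' x z (fun jj a b => hUx jj a b))
    · have hys : rowL y i ≤ s := by omega
      rw [hLy i h1 h2]
      exact meetL_le hys hzs hsn (hdisj' y z (fun jj a b => hUy jj a b))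
  -- Lhd w B
  have hwB : Lhd w B := by
    rw [lhd_iff]
    refine ⟨fun j a b => le_of_eq (hUeq j a b).symm, fun i a b => le_of_eq (hLeq i a b).symm, ?_⟩
    intro c hfw hfB hmem
    have himpz : IsFree z c → c ∈ z.cells := fun hfz => hwz.2.2 c hfw hfz hmem
    by_cases hfx : IsFree x c
    · by_cases hfy : IsFree y c
      · -- free in both x and y : go through the join p
        obtain ⟨hcell, hjn, hUx', hLx'⟩ := (isFree_iff x c).mp hfx
        obtain ⟨_, _, hUy', hLy'⟩ := (isFree_iff y c).mp hfy
        obtain ⟨hi1, hin, hj1, _, _⟩ := id hcell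
        have hi2 : 2 ≤ c.1 := by
          have := one_le_colU x hj1 (by omega)
          omega
        have hfp : IsFree p c := by
          refine (isFree_iff p c).mpr ⟨hcell, hjn, ?_, ?_⟩
          · rw [hUp _ hj1 hjn]
            have := (joinU_mem (x := x) (z := y) hj1 (by omega : c.2 ≤ n)).2.1
            omega
          · rw [hLp _ hi2 hin]
            omega
        have hmp : c ∈ p.cells := hwp.2.2 c hfw hfp hmem
        rcases hFp c hfp hmp with hb | ⟨hfx', hmx'⟩ | ⟨hfy', hmy'⟩
        · exact B.border_mem _ hb
        · exact hFx c hfB (fun _ => hmx') himpz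
        · exact hFy c hfB (fun _ => hmy') himpz
      · exact hFy c hfB (fun h => absurd h hfy) himpz
    · exact hFx c hfB (fun h => absurd h hfx) himpz
  exact lhd_antisymm hwB hBw

end Main

/-- the lattice `esTam n` is semidistributive. -/
theorem esTam_semidistributive (n : ℕ) (hn : 1 ≤ n) :
    (∀ x y z xz yz : FB n, IsJoin x z xz → IsJoin y z yz → xz = yz →
      ∀ xy w : FB n, IsMeet x y xy → IsJoin xy z w → w = xz) ∧
    (∀ x y z xz yz : FB n, IsMeet x z xz → IsMeet y z yz → xz = yz →
      ∀ xy w : FB n, IsJoin x y xy → IsMeet xy z w → w = xz) := by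
  constructor
  · intro x y z xz yz hxz hyz heq xy w hxy hw
    subst heq
    exact sd_join hn hxz hyz hxy hw
  · intro x y z xz yz hxz hyz heq xy w hxy hw
    subst heq
    exact sd_meet hn hxz hyz hxy hw

end EsTam
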